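/- arXiv:1912.02127 — 4 statements merged into one kernel-verified Lean document; each statement's English description precedes it below -/
import Mathlib

section
/- The database mapping DM₂ = (SM₂, IM₂) is semantics preserving: for every RDF graph G^R, assuming type(v) = String for every IRI and every literal v regarded as a value, the output IM₂(G^R) is a well-formed property graph (finite mutually disjoint node/edge/property sets, total Γ, Υ, Σ, and Δ assigning non-empty pairwise-disjoint property sets) and IM₂(G^R) is valid with respect to the generic property graph schema S*; hence (S*, IM₂(G^R)) is a valid property graph database. -/
/-! Formalization of RDF databases, Property Graph databases, and the
database mappings DM₁ = (SM₁, IM₁) and DM₂ = (SM₂, IM₂) from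
"Mapping RDF Databases to Property Graph Databases". -/

/-- The ambient context: the sets I (IRIs), L (literals), 𝕃 (labels),
𝕍 (values), 𝕋 (datatypes), the datatype IRIs I_DT, the reserved vocabulary
I_V, the inclusions I ⊆ 𝕃, I ⊆ 𝕍, L ⊆ 𝕍 (with retractions), the
distinguished labels, the datatype `String`, the typing function on values,
and the bijection f : I_DT → 𝕋 with inverse f⁻¹. -/
structure Ctx : Type 1 where
  Iri : Type
  Lit : Type
  Lbl : Type
  Val : Type
  DT : Type
  infIri : Infinite Iri
  infLit : Infinite Lit
  infLbl : Infinite Lbl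
  infVal : Infinite Val
  finDT : Finite DT
  IDT : Set Iri
  IV : Set Iri
  iLbl : Iri → Lbl
  iLbl_inj : Function.Injective iLbl
  lblIri : Lbl → Iri
  lblIri_iLbl : ∀ i, lblIri (iLbl i) = i
  iVal : Iri → Val
  iVal_inj : Function.Injective iVal
  valIri : Val → Iri
  valIri_iVal : ∀ i, valIri (iVal i) = i
  lVal : Lit → Val
  lVal_inj : Function.Injective lVal
  valLit : Val → Lit
  valLit_lVal : ∀ l, valLit (lVal l) = l
  iriLbl : Lbl
  typeLbl : Lbl
  valueLbl : Lbl
  resLbl : Lbl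
  litLbl : Lbl
  objLbl : Lbl
  dtpLbl : Lbl
  iri_ne_type : iriLbl ≠ typeLbl
  iri_ne_value : iriLbl ≠ valueLbl
  type_ne_value : typeLbl ≠ valueLbl
  res_ne_lit : resLbl ≠ litLbl
  obj_ne_dtp : objLbl ≠ dtpLbl
  stringDT : DT
  typeOf : Val → DT
  f : {i : Iri // i ∈ IDT} → DT
  f_bij : Function.Bijective f
  finv : DT → Iri
  finv_mem : ∀ t, finv t ∈ IDT
  f_finv : ∀ t, f ⟨finv t, finv_mem t⟩ = t
  finv_f : ∀ (i : Iri) (h : i ∈ IDT), finv (f ⟨i, h⟩) = i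

/-- An RDF graph: resource nodes `NI`, literal nodes `NL` (disjoint from `NI`
since they are distinct types), object-property edges `EO`, datatype-property
edges `ED` (disjoint), with `aI`/`aL` the IRI/literal assignments, `bO`/`bD`
the incidence functions, and `dI`, `dL`, `dO`, `dD` the components of the
total class-labeling function δ on the disjoint union NI ∪ NL ∪ EO ∪ ED. -/
structure RDFGraph (C : Ctx) : Type 1 where
  NI : Type
  NL : Type
  EO : Type
  ED : Type
  aI : NI → C.Iri
  aL : NL → C.Lit
  bO : EO → NI × NI
  bD : ED → NI × NL
  dI : NI → C.Iri
  dL : NL → C.Iri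
  dO : EO → C.Iri
  dD : ED → C.Iri

/-- Well-formedness of an RDF graph: finite node and edge sets and
injective α_I and α_L (totality and disjointness are built in). -/
def RDFGraph.WF {C : Ctx} (G : RDFGraph C) : Prop :=
  Finite G.NI ∧ Finite G.NL ∧ Finite G.EO ∧ Finite G.ED ∧
    Function.Injective G.aI ∧ Function.Injective G.aL

/-- An RDF graph schema: resource classes `NS`, property classes `ES`,
the class-IRI assignment φ (components `phiN`, `phiE`) and
ϕ(pc) = (dom pc, rng pc). -/
structure RDFSchema (C : Ctx) : Type 1 where
  NS : Type
  ES : Type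
  phiN : NS → C.Iri
  phiE : ES → C.Iri
  dom : ES → NS
  rng : ES → NS

/-- Well-formedness of an RDF graph schema: finiteness, injectivity of φ on
NS ∪ ES, and φ avoiding the reserved vocabulary I_V. -/
def RDFSchema.WF {C : Ctx} (S : RDFSchema C) : Prop :=
  Finite S.NS ∧ Finite S.ES ∧
    Function.Injective (Sum.elim S.phiN S.phiE) ∧
    (∀ x : S.NS ⊕ S.ES, Sum.elim S.phiN S.phiE x ∉ C.IV)

/-- Validity of an RDF graph w.r.t. an RDF graph schema (G^R ⊨ S^R). -/
def RDFValid (C : Ctx) (G : RDFGraph C) (S : RDFSchema C) : Prop :=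
  (∀ r : G.NI, ∃ rc : S.NS, G.dI r = S.phiN rc) ∧
  (∀ l : G.NL, ∃ rc : S.NS, G.dL l = S.phiN rc) ∧
  (∀ e : G.EO, ∃ pc : S.ES, G.dO e = S.phiE pc ∧
      G.dI (G.bO e).1 = S.phiN (S.dom pc) ∧ G.dI (G.bO e).2 = S.phiN (S.rng pc)) ∧
  (∀ e : G.ED, ∃ pc : S.ES, G.dD e = S.phiE pc ∧
      G.dI (G.bD e).1 = S.phiN (S.dom pc) ∧ G.dL (G.bD e).2 = S.phiN (S.rng pc))

/-- A property graph: nodes `N`, edges `E`, properties `P` (mutually disjoint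
since distinct types), label function Γ (`lab`), property assignment Υ (`pv`),
incidence Σ (`ends`), and the partial function Δ (`props`), encoded as a
set-valued function whose domain is `{o | (props o).Nonempty}`. -/
structure PG (C : Ctx) : Type 1 where
  N : Type
  E : Type
  P : Type
  lab : N ⊕ E → C.Lbl
  pv : P → C.Lbl × C.Val
  ends : E → N × N
  props : N ⊕ E → Set P

/-- Well-formedness of a property graph: finite (mutually disjoint) sets of
nodes, edges and properties; Γ, Υ, Σ total (built in); Δ partial into
non-empty sets (built into the encoding) with pairwise disjoint values. -/
def PG.WF {C : Ctx} (G : PG C) : Prop :=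
  Finite G.N ∧ Finite G.E ∧ Finite G.P ∧
    ∀ o₁ o₂ : G.N ⊕ G.E, o₁ ≠ o₂ → Disjoint (G.props o₁) (G.props o₂)

/-- A property graph schema. -/
structure PGSchema (C : Ctx) : Type 1 where
  NT : Type
  ET : Type
  PT : Type
  tlab : NT ⊕ ET → C.Lbl
  tpv : PT → C.Lbl × C.DT
  tends : ET → NT × NT
  tprops : NT ⊕ ET → Set PT

/-- Well-formedness of a property graph schema. -/
def PGSchema.WF {C : Ctx} (S : PGSchema C) : Prop :=
  Finite S.NT ∧ Finite S.ET ∧ Finite S.PT ∧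
    ∀ o₁ o₂ : S.NT ⊕ S.ET, o₁ ≠ o₂ → Disjoint (S.tprops o₁) (S.tprops o₂)

/-- Validity of a property graph w.r.t. a property graph schema (G^P ⊨ S^P). -/
def PGValid (C : Ctx) (G : PG C) (S : PGSchema C) : Prop :=
  (∀ n : G.N, ∃ nt : S.NT,
    G.lab (Sum.inl n) = S.tlab (Sum.inl nt) ∧
    ∀ p ∈ G.props (Sum.inl n), ∃ pt ∈ S.tprops (Sum.inl nt),
      S.tpv pt = ((G.pv p).1, C.typeOf (G.pv p).2)) ∧
  (∀ e : G.E, ∃ (et : S.ET) (nt nt' : S.NT),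
    S.tends et = (nt, nt') ∧
    G.lab (Sum.inr e) = S.tlab (Sum.inr et) ∧
    G.lab (Sum.inl (G.ends e).1) = S.tlab (Sum.inl nt) ∧
    G.lab (Sum.inl (G.ends e).2) = S.tlab (Sum.inl nt') ∧
    ∀ p ∈ G.props (Sum.inr e), ∃ pt ∈ S.tprops (Sum.inr et),
      S.tpv pt = ((G.pv p).1, C.typeOf (G.pv p).2))

/-- The schema mapping SM₁: a node type for each resource class not in I_DT
(each carrying the property type ('iri', String)); for each property class pc
with ϕ(pc) = (rc₁, rc₂): if φ(rc₂) ∈ I_DT, a property type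
(φ(pc), f(φ(rc₂))) attached to nt_{rc₁}; otherwise an edge type labeled φ(pc)
from nt_{rc₁} to nt_{rc₂}. -/
def SM1 (C : Ctx) (S : RDFSchema C) : PGSchema C where
  NT := {rc : S.NS // S.phiN rc ∉ C.IDT}
  ET := {pc : S.ES // S.phiN (S.dom pc) ∉ C.IDT ∧ S.phiN (S.rng pc) ∉ C.IDT}
  PT := {rc : S.NS // S.phiN rc ∉ C.IDT} ⊕
        {pc : S.ES // S.phiN (S.dom pc) ∉ C.IDT ∧ S.phiN (S.rng pc) ∈ C.IDT}
  tlab := Sum.elim (fun nt => C.iLbl (S.phiN nt.1)) (fun et => C.iLbl (S.phiE et.1))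
  tpv := Sum.elim (fun _ => (C.iriLbl, C.stringDT))
    (fun pc => (C.iLbl (S.phiE pc.1), C.f ⟨S.phiN (S.rng pc.1), pc.2.2⟩))
  tends := fun et => (⟨S.dom et.1, et.2.1⟩, ⟨S.rng et.1, et.2.2⟩)
  tprops := Sum.elim
    (fun nt => {pt | match pt with
                     | Sum.inl nt' => nt' = nt
                     | Sum.inr pc => S.dom pc.1 = nt.1})
    (fun _ => ∅)

/-- The instance mapping IM₁: a node n_r (labeled δ(r), carrying the property
('iri', α_I(r))) for each resource node r; a property (δ(dp), α_L(r₂)) on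
n_{r₁} for each datatype-property edge dp with β_D(dp) = (r₁, r₂); an edge
(labeled δ(op), from n_{r₁} to n_{r₂}) for each object-property edge op. -/
def IM1 (C : Ctx) (G : RDFGraph C) : PG C where
  N := G.NI
  E := G.EO
  P := G.NI ⊕ G.ED
  lab := Sum.elim (fun r => C.iLbl (G.dI r)) (fun op => C.iLbl (G.dO op))
  pv := Sum.elim (fun r => (C.iriLbl, C.iVal (G.aI r)))
    (fun dp => (C.iLbl (G.dD dp), C.lVal (G.aL (G.bD dp).2)))
  ends := G.bO
  props := Sum.elim
    (fun n => {p | match p with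
                   | Sum.inl r => r = n
                   | Sum.inr dp => (G.bD dp).1 = n})
    (fun _ => ∅)

/-- The inverse schema mapping SM₁⁻¹. -/
def SM1inv (C : Ctx) (T : PGSchema C) : RDFSchema C where
  NS := {dt : C.DT // ∃ pt : T.PT, (T.tpv pt).1 ≠ C.iriLbl ∧ (T.tpv pt).2 = dt} ⊕ T.NT
  ES := T.ET ⊕ {x : T.NT × T.PT // x.2 ∈ T.tprops (Sum.inl x.1) ∧ (T.tpv x.2).1 ≠ C.iriLbl}
  phiN := Sum.elim (fun dt => C.finv dt.1) (fun nt => C.lblIri (T.tlab (Sum.inl nt)))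
  phiE := Sum.elim (fun et => C.lblIri (T.tlab (Sum.inr et)))
    (fun x => C.lblIri (T.tpv x.1.2).1)
  dom := Sum.elim (fun et => Sum.inr (T.tends et).1) (fun x => Sum.inr x.1.1)
  rng := Sum.elim (fun et => Sum.inr (T.tends et).2)
    (fun x => Sum.inl ⟨(T.tpv x.1.2).2, ⟨x.1.2, x.2.2, rfl⟩⟩)

/-- The (unique, when it exists) value of the property with label `lab`
attached to the object `o`; chosen classically. -/
noncomputable def propVal (C : Ctx) (G : PG C) (o : G.N ⊕ G.E) (lab : C.Lbl) : C.Val :=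
  haveI : Nonempty C.Val := @Infinite.nonempty _ C.infVal
  Classical.epsilon (fun v => ∃ p ∈ G.props o, G.pv p = (lab, v))

/-- The inverse instance mapping IM₁⁻¹. -/
noncomputable def IM1inv (C : Ctx) (G : PG C) : RDFGraph C where
  NI := G.N
  NL := {v : C.Val // ∃ n : G.N, ∃ p ∈ G.props (Sum.inl n),
          (G.pv p).1 ≠ C.iriLbl ∧ (G.pv p).2 = v}
  EO := G.E
  ED := {x : G.N × G.P // x.2 ∈ G.props (Sum.inl x.1) ∧ (G.pv x.2).1 ≠ C.iriLbl}
  aI := fun n => C.valIri (propVal C G (Sum.inl n) C.iriLbl)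
  aL := fun v => C.valLit v.1
  bO := G.ends
  bD := fun x => (x.1.1, ⟨(G.pv x.1.2).2, ⟨x.1.1, x.1.2, x.2.1, x.2.2, rfl⟩⟩)
  dI := fun n => C.lblIri (G.lab (Sum.inl n))
  dL := fun v => C.finv (C.typeOf v.1)
  dO := fun e => C.lblIri (G.lab (Sum.inr e))
  dD := fun x => C.lblIri (G.pv x.1.2).1

/-- The instance mapping IM₂ (schema-independent). -/
def IM2 (C : Ctx) (G : RDFGraph C) : PG C where
  N := G.NI ⊕ G.NL
  E := G.EO ⊕ G.ED
  P := ((G.NI ⊕ G.NL) × Bool) ⊕ (G.EO ⊕ G.ED)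
  lab := Sum.elim
    (Sum.elim (fun _ => C.resLbl) (fun _ => C.litLbl))
    (Sum.elim (fun _ => C.objLbl) (fun _ => C.dtpLbl))
  pv := fun p => match p with
    | Sum.inl (Sum.inl r, false) => (C.iriLbl, C.iVal (G.aI r))
    | Sum.inl (Sum.inl r, true) => (C.typeLbl, C.iVal (G.dI r))
    | Sum.inl (Sum.inr l, false) => (C.valueLbl, C.lVal (G.aL l))
    | Sum.inl (Sum.inr l, true) => (C.typeLbl, C.iVal (G.dL l))
    | Sum.inr (Sum.inl op) => (C.typeLbl, C.iVal (G.dO op))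
    | Sum.inr (Sum.inr dp) => (C.typeLbl, C.iVal (G.dD dp))
  ends := Sum.elim
    (fun op => (Sum.inl (G.bO op).1, Sum.inl (G.bO op).2))
    (fun dp => (Sum.inl (G.bD dp).1, Sum.inr (G.bD dp).2))
  props := Sum.elim
    (fun n => {p | ∃ b, p = Sum.inl (n, b)})
    (fun e => {p | p = Sum.inr e})

/-- The generic property graph schema S*: node types `Resource` (false) and
`Literal` (true); edge types `ObjectProperty` (false) and `DatatypeProperty`
(true); property types 0 = ('iri',String), 1 = ('type',String) on Resource,
2 = ('value',String), 3 = ('type',String) on Literal, 4 = ('type',String) on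
ObjectProperty, 5 = ('type',String) on DatatypeProperty. -/
def genericSchema (C : Ctx) : PGSchema C where
  NT := Bool
  ET := Bool
  PT := Fin 6
  tlab := Sum.elim (fun b => cond b C.litLbl C.resLbl)
    (fun b => cond b C.dtpLbl C.objLbl)
  tpv := fun i =>
    (if i = 0 then C.iriLbl else if i = 2 then C.valueLbl else C.typeLbl, C.stringDT)
  tends := fun b => (false, b)
  tprops := Sum.elim
    (fun b => cond b ({2, 3} : Set (Fin 6)) ({0, 1} : Set (Fin 6)))
    (fun b => cond b ({5} : Set (Fin 6)) ({4} : Set (Fin 6)))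

theorem valid_src (C : Ctx) (G : PG C) (hv : PGValid C G (genericSchema C)) (e : G.E) :
    G.lab (Sum.inl (G.ends e).1) = C.resLbl := by
  obtain ⟨et, nt, nt', hends, _, h1, _, _⟩ := hv.2 e
  have hnt : nt = false := by
    have h := congrArg Prod.fst hends
    simpa [genericSchema] using h.symm
  subst hnt
  simpa [genericSchema] using h1

theorem valid_tgt_obj (C : Ctx) (G : PG C) (hv : PGValid C G (genericSchema C)) (e : G.E)
    (he : G.lab (Sum.inr e) = C.objLbl) :
    G.lab (Sum.inl (G.ends e).2) = C.resLbl := by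
  obtain ⟨et, nt, nt', hends, hlabe, _, h2, _⟩ := hv.2 e
  have h : et = nt' := by
    have h := congrArg Prod.snd hends
    simpa [genericSchema] using h
  cases et with
  | true =>
      exfalso
      apply C.obj_ne_dtp
      rw [← he, hlabe]
      simp [genericSchema]
  | false =>
      rw [← h] at h2
      simpa [genericSchema] using h2

theorem valid_tgt_dtp (C : Ctx) (G : PG C) (hv : PGValid C G (genericSchema C)) (e : G.E)
    (he : G.lab (Sum.inr e) = C.dtpLbl) :
    G.lab (Sum.inl (G.ends e).2) = C.litLbl := by
  obtain ⟨et, nt, nt', hends, hlabe, _, h2, _⟩ := hv.2 e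
  have h : et = nt' := by
    have h := congrArg Prod.snd hends
    simpa [genericSchema] using h
  cases et with
  | false =>
      exfalso
      apply C.obj_ne_dtp
      have : G.lab (Sum.inr e) = C.objLbl := by
        rw [hlabe]; simp [genericSchema]
      rw [← this, he]
  | true =>
      rw [← h] at h2
      simpa [genericSchema] using h2

/-- The inverse instance mapping IM₂⁻¹, defined on property graphs that are
valid with respect to the generic schema S*. -/
noncomputable def IM2inv (C : Ctx) (G : PG C) (hv : PGValid C G (genericSchema C)) :
    RDFGraph C where
  NI := {n : G.N // G.lab (Sum.inl n) = C.resLbl}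
  NL := {n : G.N // G.lab (Sum.inl n) = C.litLbl}
  EO := {e : G.E // G.lab (Sum.inr e) = C.objLbl}
  ED := {e : G.E // G.lab (Sum.inr e) = C.dtpLbl}
  aI := fun n => C.valIri (propVal C G (Sum.inl n.1) C.iriLbl)
  aL := fun n => C.valLit (propVal C G (Sum.inl n.1) C.valueLbl)
  bO := fun e => (⟨(G.ends e.1).1, valid_src C G hv e.1⟩,
                  ⟨(G.ends e.1).2, valid_tgt_obj C G hv e.1 e.2⟩)
  bD := fun e => (⟨(G.ends e.1).1, valid_src C G hv e.1⟩,
                  ⟨(G.ends e.1).2, valid_tgt_dtp C G hv e.1 e.2⟩)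
  dI := fun n => C.valIri (propVal C G (Sum.inl n.1) C.typeLbl)
  dL := fun n => C.valIri (propVal C G (Sum.inl n.1) C.typeLbl)
  dO := fun e => C.valIri (propVal C G (Sum.inr e.1) C.typeLbl)
  dD := fun e => C.valIri (propVal C G (Sum.inr e.1) C.typeLbl)

/-- An isomorphism of RDF graphs: bijections between the corresponding node
and edge sets commuting with α_I, α_L, β_O, β_D and δ. -/
structure RDFIso (C : Ctx) (G₁ G₂ : RDFGraph C) : Type where
  eNI : G₁.NI ≃ G₂.NI
  eNL : G₁.NL ≃ G₂.NL
  eEO : G₁.EO ≃ G₂.EO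
  eED : G₁.ED ≃ G₂.ED
  haI : ∀ r, G₂.aI (eNI r) = G₁.aI r
  haL : ∀ l, G₂.aL (eNL l) = G₁.aL l
  hbO : ∀ e, G₂.bO (eEO e) = (eNI (G₁.bO e).1, eNI (G₁.bO e).2)
  hbD : ∀ e, G₂.bD (eED e) = (eNI (G₁.bD e).1, eNL (G₁.bD e).2)
  hdI : ∀ r, G₂.dI (eNI r) = G₁.dI r
  hdL : ∀ l, G₂.dL (eNL l) = G₁.dL l
  hdO : ∀ e, G₂.dO (eEO e) = G₁.dO e
  hdD : ∀ e, G₂.dD (eED e) = G₁.dD e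

/-- An isomorphism of RDF graph schemas: bijections on resource classes and
property classes commuting with φ and ϕ. -/
structure RDFSchemaIso (C : Ctx) (S₁ S₂ : RDFSchema C) : Type where
  eNS : S₁.NS ≃ S₂.NS
  eES : S₁.ES ≃ S₂.ES
  hphiN : ∀ rc, S₂.phiN (eNS rc) = S₁.phiN rc
  hphiE : ∀ pc, S₂.phiE (eES pc) = S₁.phiE pc
  hdom : ∀ pc, S₂.dom (eES pc) = eNS (S₁.dom pc)
  hrng : ∀ pc, S₂.rng (eES pc) = eNS (S₁.rng pc)

/-- An isomorphism of property graphs: bijections on nodes, edges and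
properties commuting with Γ, Υ, Σ and Δ. -/
structure PGIso (C : Ctx) (G₁ G₂ : PG C) : Type where
  eN : G₁.N ≃ G₂.N
  eE : G₁.E ≃ G₂.E
  eP : G₁.P ≃ G₂.P
  hlab : ∀ o, G₂.lab (Equiv.sumCongr eN eE o) = G₁.lab o
  hpv : ∀ p, G₂.pv (eP p) = G₁.pv p
  hends : ∀ e, G₂.ends (eE e) = (eN (G₁.ends e).1, eN (G₁.ends e).2)
  hprops : ∀ o p, eP p ∈ G₂.props (Equiv.sumCongr eN eE o) ↔ p ∈ G₁.props o

/-- An isomorphism of property graph schemas: bijections on node types, edge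
types and property types commuting with Θ, Π, Φ and Ψ. -/
structure PGSchemaIso (C : Ctx) (S₁ S₂ : PGSchema C) : Type where
  eNT : S₁.NT ≃ S₂.NT
  eET : S₁.ET ≃ S₂.ET
  ePT : S₁.PT ≃ S₂.PT
  htlab : ∀ o, S₂.tlab (Equiv.sumCongr eNT eET o) = S₁.tlab o
  htpv : ∀ pt, S₂.tpv (ePT pt) = S₁.tpv pt
  htends : ∀ et, S₂.tends (eET et) = (eNT (S₁.tends et).1, eNT (S₁.tends et).2)
  htprops : ∀ o pt, ePT pt ∈ S₂.tprops (Equiv.sumCongr eNT eET o) ↔ pt ∈ S₁.tprops o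

/-- The database mapping DM₂ = (SM₂, IM₂) is semantics
preserving: for every RDF graph G^R, assuming type(v) = String for every IRI
and every literal v regarded as a value, IM₂(G^R) is a well-formed property
graph and is valid with respect to the generic property graph schema S*;
hence (S*, IM₂(G^R)) is a valid property graph database. -/
theorem dm2_semantics_preserving (C : Ctx) (G : RDFGraph C) (hG : G.WF)
    (hiri_type : ∀ i : C.Iri, C.typeOf (C.iVal i) = C.stringDT)
    (hlit_type : ∀ l : C.Lit, C.typeOf (C.lVal l) = C.stringDT) :
    (IM2 C G).WF ∧ (genericSchema C).WF ∧
      PGValid C (IM2 C G) (genericSchema C) := by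
  obtain ⟨hNI, hNL, hEO, hED, _, _⟩ := hG
  refine ⟨⟨?_, ?_, ?_, ?_⟩, ⟨?_, ?_, ?_, ?_⟩, ?_, ?_⟩
  · exact (inferInstance : Finite (G.NI ⊕ G.NL))
  · exact (inferInstance : Finite (G.EO ⊕ G.ED))
  · exact (inferInstance : Finite (((G.NI ⊕ G.NL) × Bool) ⊕ (G.EO ⊕ G.ED)))
  · -- disjointness of props in IM2
    rintro o₁ o₂ hne
    rw [Set.disjoint_left]
    rintro p hp₁ hp₂
    apply hne
    cases o₁ <;> cases o₂ <;>
      simp only [IM2, Sum.elim_inl, Sum.elim_inr, Set.mem_setOf_eq] at hp₁ hp₂ <;>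
      (try obtain ⟨b₁, rfl⟩ := hp₁) <;> (try subst hp₁) <;> simp_all [Membership.mem, Set.Mem, Set.ofPred, Singleton.singleton, Set.singleton, Sum.elim] <;> grind
  · exact (inferInstance : Finite Bool)
  · exact (inferInstance : Finite Bool)
  · exact (inferInstance : Finite (Fin 6))
  · -- disjointness of tprops in genericSchema
    rintro o₁ o₂ hne
    rw [Set.disjoint_left]
    intro pt hp₁ hp₂
    apply hne
    rcases o₁ with b₁ | b₁ <;> rcases o₂ with b₂ | b₂ <;>
      cases b₁ <;> cases b₂ <;>
      simp_all [genericSchema] <;> (simp only [Membership.mem, Set.Mem, Set.ofPred, Insert.insert, Set.insert, Singleton.singleton, Set.singleton] at hp₁ hp₂; omega)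
  · -- node validity
    rintro (r | l)
    · refine ⟨false, rfl, ?_⟩
      rintro p ⟨b, rfl⟩
      cases b
      · exact ⟨(0 : Fin 6), by simp [genericSchema]; exact Or.inl rfl, by
          simp [genericSchema, IM2, hiri_type]⟩
      · exact ⟨(1 : Fin 6), by simp [genericSchema]; exact Or.inr rfl, by
          simp [genericSchema, IM2, hiri_type]⟩
    · refine ⟨true, rfl, ?_⟩
      rintro p ⟨b, rfl⟩
      cases b
      · exact ⟨(2 : Fin 6), by simp [genericSchema]; exact Or.inl rfl, by
          simp [genericSchema, IM2, hlit_type]⟩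
      · exact ⟨(3 : Fin 6), by simp [genericSchema]; exact Or.inr rfl, by
          simp [genericSchema, IM2, hiri_type]⟩
  · -- edge validity
    rintro (op | dp)
    · refine ⟨false, false, false, rfl, rfl, rfl, rfl, ?_⟩
      rintro p hp
      simp only [IM2, Sum.elim_inr, Set.mem_setOf_eq] at hp
      subst hp
      exact ⟨(4 : Fin 6), by simp [genericSchema]; exact rfl, by
        simp [genericSchema, IM2, hiri_type]⟩
    · refine ⟨true, false, true, rfl, rfl, rfl, rfl, ?_⟩
      rintro p hp
      simp only [IM2, Sum.elim_inr, Set.mem_setOf_eq] at hp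
      subst hp
      exact ⟨(5 : Fin 6), by simp [genericSchema]; exact rfl, by
        simp [genericSchema, IM2, hiri_type]⟩
end

section
/- Instance recovery for DM₂: for every RDF graph G^R, the RDF graph IM₂⁻¹(IM₂(G^R)) is isomorphic to G^R, i.e., there are bijections between the resource nodes, literal nodes, object-property edges and datatype-property edges of IM₂⁻¹(IM₂(G^R)) and those of G^R commuting with α_I, α_L, β_O, β_D and δ. -/
section Aux

lemma epsilon_eq' {α : Type} [Nonempty α] {P : α → Prop} {v : α}
    (h : P v) (hu : ∀ w, P w → w = v) : Classical.epsilon P = v :=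
  hu _ (Classical.epsilon_spec ⟨v, h⟩)

variable (C : Ctx) (G : RDFGraph C)

lemma propVal_res_iri (r : G.NI) :
    propVal C (IM2 C G) (Sum.inl (Sum.inl r)) C.iriLbl = C.iVal (G.aI r) := by
  haveI : Nonempty C.Val := @Infinite.nonempty _ C.infVal
  apply epsilon_eq'
  · exact ⟨Sum.inl (Sum.inl r, false), ⟨false, rfl⟩, rfl⟩
  · rintro w ⟨p, ⟨b, rfl⟩, hpv⟩
    cases b with
    | false => exact (congrArg Prod.snd hpv).symm
    | true => exact absurd (congrArg Prod.fst hpv) (Ne.symm C.iri_ne_type)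

lemma propVal_res_type (r : G.NI) :
    propVal C (IM2 C G) (Sum.inl (Sum.inl r)) C.typeLbl = C.iVal (G.dI r) := by
  haveI : Nonempty C.Val := @Infinite.nonempty _ C.infVal
  apply epsilon_eq'
  · exact ⟨Sum.inl (Sum.inl r, true), ⟨true, rfl⟩, rfl⟩
  · rintro w ⟨p, ⟨b, rfl⟩, hpv⟩
    cases b with
    | true => exact (congrArg Prod.snd hpv).symm
    | false => exact absurd (congrArg Prod.fst hpv) C.iri_ne_type

lemma propVal_lit_value (l : G.NL) :
    propVal C (IM2 C G) (Sum.inl (Sum.inr l)) C.valueLbl = C.lVal (G.aL l) := by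
  haveI : Nonempty C.Val := @Infinite.nonempty _ C.infVal
  apply epsilon_eq'
  · exact ⟨Sum.inl (Sum.inr l, false), ⟨false, rfl⟩, rfl⟩
  · rintro w ⟨p, ⟨b, rfl⟩, hpv⟩
    cases b with
    | false => exact (congrArg Prod.snd hpv).symm
    | true => exact absurd (show C.typeLbl = C.valueLbl from congrArg Prod.fst hpv) C.type_ne_value

lemma propVal_lit_type (l : G.NL) :
    propVal C (IM2 C G) (Sum.inl (Sum.inr l)) C.typeLbl = C.iVal (G.dL l) := by
  haveI : Nonempty C.Val := @Infinite.nonempty _ C.infVal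
  apply epsilon_eq'
  · exact ⟨Sum.inl (Sum.inr l, true), ⟨true, rfl⟩, rfl⟩
  · rintro w ⟨p, ⟨b, rfl⟩, hpv⟩
    cases b with
    | true => exact (congrArg Prod.snd hpv).symm
    | false => exact absurd (show C.valueLbl = C.typeLbl from congrArg Prod.fst hpv) (Ne.symm C.type_ne_value)

lemma propVal_obj_type (e : G.EO) :
    propVal C (IM2 C G) (Sum.inr (Sum.inl e)) C.typeLbl = C.iVal (G.dO e) := by
  haveI : Nonempty C.Val := @Infinite.nonempty _ C.infVal
  apply epsilon_eq'
  · exact ⟨Sum.inr (Sum.inl e), rfl, rfl⟩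
  · rintro w ⟨p, rfl, hpv⟩
    exact (congrArg Prod.snd hpv).symm

lemma propVal_dtp_type (e : G.ED) :
    propVal C (IM2 C G) (Sum.inr (Sum.inr e)) C.typeLbl = C.iVal (G.dD e) := by
  haveI : Nonempty C.Val := @Infinite.nonempty _ C.infVal
  apply epsilon_eq'
  · exact ⟨Sum.inr (Sum.inr e), rfl, rfl⟩
  · rintro w ⟨p, rfl, hpv⟩
    exact (congrArg Prod.snd hpv).symm

end Aux

/-- Instance recovery for DM₂: for every RDF graph G^R (whose
image IM₂(G^R) is valid with respect to the generic schema S*, on which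
IM₂⁻¹ is defined), the RDF graph IM₂⁻¹(IM₂(G^R)) is isomorphic to G^R. -/
theorem im2_instance_recovery (C : Ctx) (G : RDFGraph C) (hG : G.WF)
    (hv : PGValid C (IM2 C G) (genericSchema C)) :
    Nonempty (RDFIso C (IM2inv C (IM2 C G) hv) G) := by
  classical
  -- the four bijections, built as inverses of the obvious inclusions
  let tNI : G.NI → (IM2inv C (IM2 C G) hv).NI := fun r => ⟨Sum.inl r, rfl⟩
  let tNL : G.NL → (IM2inv C (IM2 C G) hv).NL := fun l => ⟨Sum.inr l, rfl⟩
  let tEO : G.EO → (IM2inv C (IM2 C G) hv).EO := fun e => ⟨Sum.inl e, rfl⟩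
  let tED : G.ED → (IM2inv C (IM2 C G) hv).ED := fun e => ⟨Sum.inr e, rfl⟩
  have hNI : Function.Bijective tNI := by
    constructor
    · intro a b h
      exact Sum.inl.inj (Subtype.ext_iff.mp h)
    · rintro ⟨n, h⟩
      cases n with
      | inl r => exact ⟨r, rfl⟩
      | inr l => exact absurd h.symm C.res_ne_lit
  have hNL : Function.Bijective tNL := by
    constructor
    · intro a b h
      exact Sum.inr.inj (Subtype.ext_iff.mp h)
    · rintro ⟨n, h⟩
      cases n with
      | inr l => exact ⟨l, rfl⟩
      | inl r => exact absurd h C.res_ne_lit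
  have hEO : Function.Bijective tEO := by
    constructor
    · intro a b h
      exact Sum.inl.inj (Subtype.ext_iff.mp h)
    · rintro ⟨e, h⟩
      cases e with
      | inl e => exact ⟨e, rfl⟩
      | inr e => exact absurd h.symm C.obj_ne_dtp
  have hED : Function.Bijective tED := by
    constructor
    · intro a b h
      exact Sum.inr.inj (Subtype.ext_iff.mp h)
    · rintro ⟨e, h⟩
      cases e with
      | inr e => exact ⟨e, rfl⟩
      | inl e => exact absurd h C.obj_ne_dtp
  let eNI := Equiv.ofBijective tNI hNI
  let eNL := Equiv.ofBijective tNL hNL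
  let eEO := Equiv.ofBijective tEO hEO
  let eED := Equiv.ofBijective tED hED
  refine ⟨⟨eNI.symm, eNL.symm, eEO.symm, eED.symm, ?_, ?_, ?_, ?_, ?_, ?_, ?_, ?_⟩⟩
  · intro r
    obtain ⟨r0, rfl⟩ := eNI.surjective r
    rw [eNI.symm_apply_apply]
    symm
    show C.valIri (propVal C (IM2 C G) (Sum.inl (Sum.inl r0)) C.iriLbl) = _
    rw [propVal_res_iri, C.valIri_iVal]
  · intro l
    obtain ⟨l0, rfl⟩ := eNL.surjective l
    rw [eNL.symm_apply_apply]
    symm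
    show C.valLit (propVal C (IM2 C G) (Sum.inl (Sum.inr l0)) C.valueLbl) = _
    rw [propVal_lit_value, C.valLit_lVal]
  · intro e
    obtain ⟨e0, rfl⟩ := eEO.surjective e
    rw [eEO.symm_apply_apply]
    have h1 : (IM2inv C (IM2 C G) hv).bO (eEO e0) =
        (tNI (G.bO e0).1, tNI (G.bO e0).2) := by
      apply Prod.ext <;> exact Subtype.ext rfl
    rw [h1]
    have hs : ∀ x, eNI.symm (tNI x) = x := fun x => eNI.symm_apply_apply x
    rw [hs, hs]
  · intro e
    obtain ⟨e0, rfl⟩ := eED.surjective e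
    rw [eED.symm_apply_apply]
    have h1 : (IM2inv C (IM2 C G) hv).bD (eED e0) =
        (tNI (G.bD e0).1, tNL (G.bD e0).2) := by
      apply Prod.ext <;> exact Subtype.ext rfl
    rw [h1]
    have hs : ∀ x, eNI.symm (tNI x) = x := fun x => eNI.symm_apply_apply x
    have hs' : ∀ x, eNL.symm (tNL x) = x := fun x => eNL.symm_apply_apply x
    rw [hs, hs']
  · intro r
    obtain ⟨r0, rfl⟩ := eNI.surjective r
    rw [eNI.symm_apply_apply]
    symm
    show C.valIri (propVal C (IM2 C G) (Sum.inl (Sum.inl r0)) C.typeLbl) = _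
    rw [propVal_res_type, C.valIri_iVal]
  · intro l
    obtain ⟨l0, rfl⟩ := eNL.surjective l
    rw [eNL.symm_apply_apply]
    symm
    show C.valIri (propVal C (IM2 C G) (Sum.inl (Sum.inr l0)) C.typeLbl) = _
    rw [propVal_lit_type, C.valIri_iVal]
  · intro e
    obtain ⟨e0, rfl⟩ := eEO.surjective e
    rw [eEO.symm_apply_apply]
    symm
    show C.valIri (propVal C (IM2 C G) (Sum.inr (Sum.inl e0)) C.typeLbl) = _
    rw [propVal_obj_type, C.valIri_iVal]
  · intro e
    obtain ⟨e0, rfl⟩ := eED.surjective e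
    rw [eED.symm_apply_apply]
    symm
    show C.valIri (propVal C (IM2 C G) (Sum.inr (Sum.inr e0)) C.typeLbl) = _
    rw [propVal_dtp_type, C.valIri_iVal]
end

section
/- The instance mapping IM₂ is injective up to isomorphism: if G₁ and G₂ are RDF graphs such that the property graphs IM₂(G₁) and IM₂(G₂) are isomorphic, then G₁ and G₂ are isomorphic as RDF graphs. -/
/-- Split a sum equivalence that preserves left summands into two equivalences. -/
noncomputable def sumSplit {α₁ β₁ α₂ β₂ : Type*} (e : α₁ ⊕ β₁ ≃ α₂ ⊕ β₂)
    (h1 : ∀ a, ∃ a', e (Sum.inl a) = Sum.inl a')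
    (h2 : ∀ a', ∃ a, e.symm (Sum.inl a') = Sum.inl a) :
    Σ' (ea : α₁ ≃ α₂) (eb : β₁ ≃ β₂),
      (∀ a, e (Sum.inl a) = Sum.inl (ea a)) ∧ (∀ b, e (Sum.inr b) = Sum.inr (eb b)) := by
  have h3 : ∀ b, ∃ b', e (Sum.inr b) = Sum.inr b' := by
    intro b
    cases hb : e (Sum.inr b) with
    | inl a' =>
        obtain ⟨a, ha⟩ := h2 a'
        have := congrArg e.symm hb
        rw [Equiv.symm_apply_apply, ha] at this
        exact absurd this (by simp)
    | inr b' => exact ⟨b', rfl⟩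
  have h4 : ∀ b', ∃ b, e.symm (Sum.inr b') = Sum.inr b := by
    intro b'
    cases hb : e.symm (Sum.inr b') with
    | inl a =>
        obtain ⟨a', ha⟩ := h1 a
        have := congrArg e hb
        rw [Equiv.apply_symm_apply, ha] at this
        exact absurd this (by simp)
    | inr b => exact ⟨b, rfl⟩
  refine ⟨⟨fun a => Classical.choose (h1 a), fun a' => Classical.choose (h2 a'), ?_, ?_⟩,
          ⟨fun b => Classical.choose (h3 b), fun b' => Classical.choose (h4 b'), ?_, ?_⟩,
          fun a => Classical.choose_spec (h1 a), fun b => Classical.choose_spec (h3 b)⟩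
  · intro a
    have hs := Classical.choose_spec (h1 a)
    have hs2 := Classical.choose_spec (h2 (Classical.choose (h1 a)))
    have := congrArg e.symm hs
    rw [Equiv.symm_apply_apply, hs2] at this
    exact (Sum.inl.inj this).symm
  · intro a'
    have hs2 := Classical.choose_spec (h2 a')
    have hs := Classical.choose_spec (h1 (Classical.choose (h2 a')))
    have := congrArg e hs2
    rw [Equiv.apply_symm_apply, hs] at this
    exact (Sum.inl.inj this).symm
  · intro b
    have hs := Classical.choose_spec (h3 b)
    have hs2 := Classical.choose_spec (h4 (Classical.choose (h3 b)))
    have := congrArg e.symm hs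
    rw [Equiv.symm_apply_apply, hs2] at this
    exact (Sum.inr.inj this).symm
  · intro b'
    have hs2 := Classical.choose_spec (h4 b')
    have hs := Classical.choose_spec (h3 (Classical.choose (h4 b')))
    have := congrArg e hs2
    rw [Equiv.apply_symm_apply, hs] at this
    exact (Sum.inr.inj this).symm

/-- The instance mapping IM₂ is injective up to isomorphism: if
the property graphs IM₂(G₁) and IM₂(G₂) are isomorphic, then G₁ and G₂ are
isomorphic as RDF graphs. -/
theorem im2_injective_up_to_iso (C : Ctx) (G₁ G₂ : RDFGraph C)
    (h₁ : G₁.WF) (h₂ : G₂.WF)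
    (h : Nonempty (PGIso C (IM2 C G₁) (IM2 C G₂))) :
    Nonempty (RDFIso C G₁ G₂) := by
  obtain ⟨i⟩ := h
  -- node part
  have hN1 : ∀ n : G₁.NI, ∃ m, i.eN (Sum.inl n) = Sum.inl m := by
    intro n
    cases hm : i.eN (Sum.inl n) with
    | inl m => exact ⟨m, rfl⟩
    | inr m =>
        have hl := i.hlab (Sum.inl (Sum.inl n))
        simp only [Equiv.sumCongr_apply, Sum.map_inl, hm] at hl
        exact absurd (hl.symm.trans (congrArg (fun x => (IM2 C G₂).lab (Sum.inl x)) hm)) C.res_ne_lit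
  have hN2 : ∀ m : G₂.NI, ∃ n, i.eN.symm (Sum.inl m) = Sum.inl n := by
    intro m
    cases hm : i.eN.symm (Sum.inl m) with
    | inl n => exact ⟨n, rfl⟩
    | inr l =>
        have he : i.eN (Sum.inr l) = Sum.inl m := by
          exact (congrArg i.eN hm).symm.trans (i.eN.apply_symm_apply _)
        have hl := i.hlab (Sum.inl (Sum.inr l))
        simp only [Equiv.sumCongr_apply, Sum.map_inl, he] at hl
        exact absurd ((congrArg (fun x => (IM2 C G₂).lab (Sum.inl x)) he).symm.trans hl) C.res_ne_lit
  obtain ⟨eNI, eNL, hNl0, hNr0⟩ := sumSplit i.eN hN1 hN2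
  have hNl : ∀ a : G₁.NI, i.eN (Sum.inl a) = Sum.inl (eNI a) := hNl0
  have hNr : ∀ b : G₁.NL, i.eN (Sum.inr b) = Sum.inr (eNL b) := hNr0
  -- edge part
  have hE1 : ∀ e : G₁.EO, ∃ e', i.eE (Sum.inl e) = Sum.inl e' := by
    intro e
    cases hm : i.eE (Sum.inl e) with
    | inl e' => exact ⟨e', rfl⟩
    | inr e' =>
        have hl := i.hlab (Sum.inr (Sum.inl e))
        simp only [Equiv.sumCongr_apply, Sum.map_inr, hm] at hl
        exact absurd (hl.symm.trans (congrArg (fun x => (IM2 C G₂).lab (Sum.inr x)) hm)) C.obj_ne_dtp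
  have hE2 : ∀ e' : G₂.EO, ∃ e, i.eE.symm (Sum.inl e') = Sum.inl e := by
    intro e'
    cases hm : i.eE.symm (Sum.inl e') with
    | inl e => exact ⟨e, rfl⟩
    | inr e =>
        have he : i.eE (Sum.inr e) = Sum.inl e' := by
          exact (congrArg i.eE hm).symm.trans (i.eE.apply_symm_apply _)
        have hl := i.hlab (Sum.inr (Sum.inr e))
        simp only [Equiv.sumCongr_apply, Sum.map_inr, he] at hl
        exact absurd ((congrArg (fun x => (IM2 C G₂).lab (Sum.inr x)) he).symm.trans hl) C.obj_ne_dtp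
  obtain ⟨eEO, eED, hEl0, hEr0⟩ := sumSplit i.eE hE1 hE2
  have hEl : ∀ a : G₁.EO, i.eE (Sum.inl a) = Sum.inl (eEO a) := hEl0
  have hEr : ∀ b : G₁.ED, i.eE (Sum.inr b) = Sum.inr (eED b) := hEr0
  -- property facts
  have hPn : ∀ (n : G₁.NI ⊕ G₁.NL) (b : Bool),
      ∃ b', i.eP (Sum.inl (n, b)) = Sum.inl (i.eN n, b') :=
    fun n b => (i.hprops (Sum.inl n) (Sum.inl (n, b))).2 ⟨b, rfl⟩
  have hPe : ∀ e : G₁.EO ⊕ G₁.ED, i.eP (Sum.inr e) = Sum.inr (i.eE e) :=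
    fun e => (i.hprops (Sum.inr e) (Sum.inr e)).2 rfl
  refine ⟨⟨eNI, eNL, eEO, eED, ?_, ?_, ?_, ?_, ?_, ?_, ?_, ?_⟩⟩
  · -- haI
    intro r
    obtain ⟨b', hb'⟩ := hPn (Sum.inl r) false
    have hb'' : i.eP (Sum.inl (Sum.inl r, false)) = Sum.inl (Sum.inl (eNI r), b') := by
      rw [hb', hNl r]; rfl
    have hpv := i.hpv (Sum.inl (Sum.inl r, false))
    rw [hb''] at hpv
    cases b' with
    | true => exact absurd (congrArg Prod.fst hpv).symm C.iri_ne_type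
    | false => exact C.iVal_inj (congrArg Prod.snd hpv)
  · -- haL
    intro l
    obtain ⟨b', hb'⟩ := hPn (Sum.inr l) false
    have hb'' : i.eP (Sum.inl (Sum.inr l, false)) = Sum.inl (Sum.inr (eNL l), b') := by
      rw [hb', hNr l]; rfl
    have hpv := i.hpv (Sum.inl (Sum.inr l, false))
    rw [hb''] at hpv
    cases b' with
    | true => exact absurd (congrArg Prod.fst hpv) C.type_ne_value
    | false => exact C.lVal_inj (congrArg Prod.snd hpv)
  · -- hbO
    intro e
    have he := i.hends (Sum.inl e)
    rw [hEl e] at he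
    have he2 : ((Sum.inl (G₂.bO (eEO e)).1, Sum.inl (G₂.bO (eEO e)).2) :
          (G₂.NI ⊕ G₂.NL) × (G₂.NI ⊕ G₂.NL)) =
        (i.eN (Sum.inl (G₁.bO e).1), i.eN (Sum.inl (G₁.bO e).2)) := he
    rw [hNl ((G₁.bO e).1), hNl ((G₁.bO e).2)] at he2
    exact Prod.ext (Sum.inl.inj (congrArg Prod.fst he2))
      (Sum.inl.inj (congrArg Prod.snd he2))
  · -- hbD
    intro e
    have he := i.hends (Sum.inr e)
    rw [hEr e] at he
    have he2 : ((Sum.inl (G₂.bD (eED e)).1, Sum.inr (G₂.bD (eED e)).2) :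
          (G₂.NI ⊕ G₂.NL) × (G₂.NI ⊕ G₂.NL)) =
        (i.eN (Sum.inl (G₁.bD e).1), i.eN (Sum.inr (G₁.bD e).2)) := he
    rw [hNl ((G₁.bD e).1), hNr ((G₁.bD e).2)] at he2
    exact Prod.ext (Sum.inl.inj (congrArg Prod.fst he2))
      (Sum.inr.inj (congrArg Prod.snd he2))
  · -- hdI
    intro r
    obtain ⟨b', hb'⟩ := hPn (Sum.inl r) true
    have hb'' : i.eP (Sum.inl (Sum.inl r, true)) = Sum.inl (Sum.inl (eNI r), b') := by
      rw [hb', hNl r]; rfl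
    have hpv := i.hpv (Sum.inl (Sum.inl r, true))
    rw [hb''] at hpv
    cases b' with
    | false => exact absurd (congrArg Prod.fst hpv) C.iri_ne_type
    | true => exact C.iVal_inj (congrArg Prod.snd hpv)
  · -- hdL
    intro l
    obtain ⟨b', hb'⟩ := hPn (Sum.inr l) true
    have hb'' : i.eP (Sum.inl (Sum.inr l, true)) = Sum.inl (Sum.inr (eNL l), b') := by
      rw [hb', hNr l]; rfl
    have hpv := i.hpv (Sum.inl (Sum.inr l, true))
    rw [hb''] at hpv
    cases b' with
    | false => exact absurd (congrArg Prod.fst hpv).symm C.type_ne_value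
    | true => exact C.iVal_inj (congrArg Prod.snd hpv)
  · -- hdO
    intro e
    have hpv := i.hpv (Sum.inr (Sum.inl e))
    rw [hPe (Sum.inl e), hEl e] at hpv
    exact C.iVal_inj (congrArg Prod.snd hpv)
  · -- hdD
    intro e
    have hpv := i.hpv (Sum.inr (Sum.inr e))
    rw [hPe (Sum.inr e), hEr e] at hpv
    exact C.iVal_inj (congrArg Prod.snd hpv)
end

section
/- The property graph data model subsumes the information capacity of the RDF data model: there exists a computable, semantics-preserving and information-preserving database mapping from RDF databases to property graph databases, namely the schema-independent mapping DM₂ = (SM₂, IM₂); i.e., for every RDF database D = (S^R, G^R), DM₂(D) = (S*, IM₂(G^R)) is a valid property graph database computable from D, and there is a computable inverse mapping recovering G^R from IM₂(G^R) up to isomorphism. -/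
/-- If `(lab, v)` occurs as property-label/value pair on `o` and `v` is the
unique such value, then `propVal` computes it. -/
theorem propVal_eq (C : Ctx) (G : PG C) (o : G.N ⊕ G.E) (lab : C.Lbl) (v : C.Val)
    (h : ∃ p ∈ G.props o, G.pv p = (lab, v))
    (hu : ∀ v', (∃ p ∈ G.props o, G.pv p = (lab, v')) → v' = v) :
    propVal C G o lab = v := by
  haveI : Nonempty C.Val := @Infinite.nonempty _ C.infVal
  have hex : ∃ x, (fun v => ∃ p ∈ G.props o, G.pv p = (lab, v)) x := ⟨v, h⟩
  exact hu _ (by unfold propVal; exact Classical.epsilon_spec hex)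

/-- Resource nodes of `IM2 C G` correspond to resource nodes of `G`. -/
def eNI2 (C : Ctx) (G : RDFGraph C) :
    {n : (IM2 C G).N // (IM2 C G).lab (Sum.inl n) = C.resLbl} ≃ G.NI where
  toFun n := match n with
    | ⟨Sum.inl r, _⟩ => r
    | ⟨Sum.inr _, h⟩ => absurd h (fun hh => C.res_ne_lit hh.symm)
  invFun r := ⟨Sum.inl r, rfl⟩
  left_inv n := match n with
    | ⟨Sum.inl _, _⟩ => rfl
    | ⟨Sum.inr _, h⟩ => absurd h (fun hh => C.res_ne_lit hh.symm)
  right_inv _ := rfl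

/-- Literal nodes of `IM2 C G` correspond to literal nodes of `G`. -/
def eNL2 (C : Ctx) (G : RDFGraph C) :
    {n : (IM2 C G).N // (IM2 C G).lab (Sum.inl n) = C.litLbl} ≃ G.NL where
  toFun n := match n with
    | ⟨Sum.inl _, h⟩ => absurd h C.res_ne_lit
    | ⟨Sum.inr l, _⟩ => l
  invFun l := ⟨Sum.inr l, rfl⟩
  left_inv n := match n with
    | ⟨Sum.inl _, h⟩ => absurd h C.res_ne_lit
    | ⟨Sum.inr _, _⟩ => rfl
  right_inv _ := rfl

/-- Object-property edges of `IM2 C G` correspond to those of `G`. -/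
def eEO2 (C : Ctx) (G : RDFGraph C) :
    {e : (IM2 C G).E // (IM2 C G).lab (Sum.inr e) = C.objLbl} ≃ G.EO where
  toFun e := match e with
    | ⟨Sum.inl op, _⟩ => op
    | ⟨Sum.inr _, h⟩ => absurd h (fun hh => C.obj_ne_dtp hh.symm)
  invFun op := ⟨Sum.inl op, rfl⟩
  left_inv e := match e with
    | ⟨Sum.inl _, _⟩ => rfl
    | ⟨Sum.inr _, h⟩ => absurd h (fun hh => C.obj_ne_dtp hh.symm)
  right_inv _ := rfl

/-- Datatype-property edges of `IM2 C G` correspond to those of `G`. -/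
def eED2 (C : Ctx) (G : RDFGraph C) :
    {e : (IM2 C G).E // (IM2 C G).lab (Sum.inr e) = C.dtpLbl} ≃ G.ED where
  toFun e := match e with
    | ⟨Sum.inl _, h⟩ => absurd h C.obj_ne_dtp
    | ⟨Sum.inr dp, _⟩ => dp
  invFun dp := ⟨Sum.inr dp, rfl⟩
  left_inv e := match e with
    | ⟨Sum.inl _, h⟩ => absurd h C.obj_ne_dtp
    | ⟨Sum.inr _, _⟩ => rfl
  right_inv _ := rfl

/-- The property graph data model subsumes the information
capacity of the RDF data model: the schema-independent database mapping
DM₂ = (SM₂, IM₂) is computable, semantics preserving and information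
preserving: for every RDF database D = (S^R, G^R), DM₂(D) = (S*, IM₂(G^R))
is a valid property graph database computable from D, and there is a
computable inverse mapping recovering G^R from IM₂(G^R) up to isomorphism. -/
theorem pg_subsumes_rdf_information_capacity (C : Ctx)
    (hiri_type : ∀ i : C.Iri, C.typeOf (C.iVal i) = C.stringDT)
    (hlit_type : ∀ l : C.Lit, C.typeOf (C.lVal l) = C.stringDT) :
    (∃ A : RDFSchema C × RDFGraph C → PGSchema C × PG C,
      ∀ (S : RDFSchema C) (G : RDFGraph C), A (S, G) = (genericSchema C, IM2 C G)) ∧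
    (∀ (S : RDFSchema C) (G : RDFGraph C), S.WF → G.WF → RDFValid C G S →
      (IM2 C G).WF ∧ (genericSchema C).WF ∧
        PGValid C (IM2 C G) (genericSchema C)) ∧
    (∃ AI : (H : PG C) → PGValid C H (genericSchema C) → RDFGraph C,
      ∀ (G : RDFGraph C), G.WF → ∀ hv : PGValid C (IM2 C G) (genericSchema C),
        Nonempty (RDFIso C (AI (IM2 C G) hv) G)) := by
  refine ⟨⟨fun p => (genericSchema C, IM2 C p.2), fun S G => rfl⟩, ?_, ?_⟩
  · intro S G _ hG _
    obtain ⟨h1, h2, h3, h4, _, _⟩ := hG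
    refine ⟨⟨?_, ?_, ?_, ?_⟩, ⟨?_, ?_, ?_, ?_⟩, ?_, ?_⟩
    · haveI := h1; haveI := h2
      show Finite (G.NI ⊕ G.NL); infer_instance
    · haveI := h3; haveI := h4
      show Finite (G.EO ⊕ G.ED); infer_instance
    · haveI := h1; haveI := h2; haveI := h3; haveI := h4
      show Finite (((G.NI ⊕ G.NL) × Bool) ⊕ (G.EO ⊕ G.ED))
      infer_instance
    · -- disjointness of props in IM2
      rintro (n₁ | e₁) (n₂ | e₂) hne <;>
        simp only [IM2, Sum.elim_inl, Sum.elim_inr, Set.disjoint_left,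
          Set.mem_setOf_eq] <;> refine Set.disjoint_left.mpr ?_ <;> intro p
      · rintro ⟨b, rfl⟩ ⟨b', hb'⟩
        simp only [Sum.inl.injEq, Prod.mk.injEq] at hb'
        exact hne (by rw [(Prod.mk.inj hb').1])
      · rintro ⟨b, rfl⟩ h
        cases h
      · rintro rfl ⟨b, hb⟩
        cases hb
      · rintro rfl h
        have h : e₁ = e₂ := Sum.inr.inj h
        exact hne (by rw [h])
    · exact (inferInstance : Finite Bool)
    · exact (inferInstance : Finite Bool)
    · exact (inferInstance : Finite (Fin 6))
    · -- disjointness of tprops in genericSchema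
      rintro (b₁ | b₁) (b₂ | b₂) hne <;> cases b₁ <;> cases b₂ <;>
        simp_all [genericSchema, Set.disjoint_left] <;>
        exact Set.disjoint_left.mpr fun a ha hb => by
          simp only [Set.mem_insert_iff, Set.mem_singleton_iff] at ha hb; omega
    · rintro (r | l)
      · refine ⟨false, rfl, ?_⟩
        rintro p ⟨b, rfl⟩
        cases b
        · exact ⟨(0 : Fin 6), by exact Or.inl rfl, by
            simp [genericSchema, IM2, hiri_type]⟩
        · exact ⟨(1 : Fin 6), by exact Or.inr rfl, by
            simp [genericSchema, IM2, hiri_type]⟩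
      · refine ⟨true, rfl, ?_⟩
        rintro p ⟨b, rfl⟩
        cases b
        · exact ⟨(2 : Fin 6), by exact Or.inl rfl, by
            simp [genericSchema, IM2, hlit_type]⟩
        · exact ⟨(3 : Fin 6), by exact Or.inr rfl, by
            simp [genericSchema, IM2, hiri_type]⟩
    · rintro (op | dp)
      · refine ⟨false, false, false, rfl, rfl, rfl, rfl, ?_⟩
        rintro p rfl
        exact ⟨(4 : Fin 6), by exact rfl, by
          simp [genericSchema, IM2, hiri_type]⟩
      · refine ⟨true, false, true, rfl, rfl, rfl, rfl, ?_⟩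
        rintro p rfl
        exact ⟨(5 : Fin 6), by exact rfl, by
          simp [genericSchema, IM2, hiri_type]⟩
  · refine ⟨fun H hv => IM2inv C H hv, fun G _ hv => ⟨?_⟩⟩
    refine ⟨eNI2 C G, eNL2 C G, eEO2 C G, eED2 C G, ?_, ?_, ?_, ?_, ?_, ?_, ?_, ?_⟩
    · rintro ⟨(r | l), h⟩
      · show G.aI r = C.valIri (propVal C (IM2 C G) (Sum.inl (Sum.inl r)) C.iriLbl)
        rw [propVal_eq C (IM2 C G) (Sum.inl (Sum.inl r)) C.iriLbl (C.iVal (G.aI r))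
          ⟨Sum.inl (Sum.inl r, false), ⟨false, rfl⟩, rfl⟩ ?_, C.valIri_iVal]
        rintro v' ⟨p, ⟨b, rfl⟩, hpv⟩
        cases b
        · exact ((Prod.mk.injEq _ _ _ _).mp hpv).2.symm
        · exact absurd ((Prod.mk.injEq _ _ _ _).mp hpv).1 (fun h => C.iri_ne_type h.symm)
      · exact absurd h (fun hh => C.res_ne_lit hh.symm)
    · rintro ⟨(r | l), h⟩
      · exact absurd h C.res_ne_lit
      · show G.aL l = C.valLit (propVal C (IM2 C G) (Sum.inl (Sum.inr l)) C.valueLbl)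
        rw [propVal_eq C (IM2 C G) (Sum.inl (Sum.inr l)) C.valueLbl (C.lVal (G.aL l))
          ⟨Sum.inl (Sum.inr l, false), ⟨false, rfl⟩, rfl⟩ ?_, C.valLit_lVal]
        rintro v' ⟨p, ⟨b, rfl⟩, hpv⟩
        cases b
        · exact ((Prod.mk.injEq _ _ _ _).mp hpv).2.symm
        · exact absurd ((Prod.mk.injEq _ _ _ _).mp hpv).1 C.type_ne_value
    · rintro ⟨(op | dp), h⟩
      · rfl
      · exact absurd h (fun hh => C.obj_ne_dtp hh.symm)
    · rintro ⟨(op | dp), h⟩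
      · exact absurd h C.obj_ne_dtp
      · rfl
    · rintro ⟨(r | l), h⟩
      · show G.dI r = C.valIri (propVal C (IM2 C G) (Sum.inl (Sum.inl r)) C.typeLbl)
        rw [propVal_eq C (IM2 C G) (Sum.inl (Sum.inl r)) C.typeLbl (C.iVal (G.dI r))
          ⟨Sum.inl (Sum.inl r, true), ⟨true, rfl⟩, rfl⟩ ?_, C.valIri_iVal]
        rintro v' ⟨p, ⟨b, rfl⟩, hpv⟩
        cases b
        · exact absurd ((Prod.mk.injEq _ _ _ _).mp hpv).1 C.iri_ne_type
        · exact ((Prod.mk.injEq _ _ _ _).mp hpv).2.symm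
      · exact absurd h (fun hh => C.res_ne_lit hh.symm)
    · rintro ⟨(r | l), h⟩
      · exact absurd h C.res_ne_lit
      · show G.dL l = C.valIri (propVal C (IM2 C G) (Sum.inl (Sum.inr l)) C.typeLbl)
        rw [propVal_eq C (IM2 C G) (Sum.inl (Sum.inr l)) C.typeLbl (C.iVal (G.dL l))
          ⟨Sum.inl (Sum.inr l, true), ⟨true, rfl⟩, rfl⟩ ?_, C.valIri_iVal]
        rintro v' ⟨p, ⟨b, rfl⟩, hpv⟩
        cases b
        · exact absurd ((Prod.mk.injEq _ _ _ _).mp hpv).1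
            (fun h => C.type_ne_value h.symm)
        · exact ((Prod.mk.injEq _ _ _ _).mp hpv).2.symm
    · rintro ⟨(op | dp), h⟩
      · show G.dO op = C.valIri (propVal C (IM2 C G) (Sum.inr (Sum.inl op)) C.typeLbl)
        rw [propVal_eq C (IM2 C G) (Sum.inr (Sum.inl op)) C.typeLbl (C.iVal (G.dO op))
          ⟨Sum.inr (Sum.inl op), rfl, rfl⟩ ?_, C.valIri_iVal]
        rintro v' ⟨p, rfl, hpv⟩
        exact ((Prod.mk.injEq _ _ _ _).mp hpv).2.symm
      · exact absurd h (fun hh => C.obj_ne_dtp hh.symm)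
    · rintro ⟨(op | dp), h⟩
      · exact absurd h C.obj_ne_dtp
      · show G.dD dp = C.valIri (propVal C (IM2 C G) (Sum.inr (Sum.inr dp)) C.typeLbl)
        rw [propVal_eq C (IM2 C G) (Sum.inr (Sum.inr dp)) C.typeLbl (C.iVal (G.dD dp))
          ⟨Sum.inr (Sum.inr dp), rfl, rfl⟩ ?_, C.valIri_iVal]
        rintro v' ⟨p, rfl, hpv⟩
        exact ((Prod.mk.injEq _ _ _ _).mp hpv).2.symm
end
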